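/- For any constants c₂ > 0 and sufficiently large y, the sum over primes p with √y ≤ p < y/2 of (c₂ y / (p log(y/p)))² is O(y^{3/2} / (log y)³). -/

import Mathlib

open Real Finset

lemma cheb_block (m : ℕ) (hm : 2 ≤ m) :
    ∑ p ∈ (Finset.Ioc m (2*m)).filter Nat.Prime, ((p:ℝ)^2)⁻¹
      ≤ 2 * Real.log 4 / (m * Real.log m) := by
  set T := (Finset.Ioc m (2*m)).filter Nat.Prime with hT
  have hm1 : (1:ℝ) < m := by exact_mod_cast hm.trans_lt' one_lt_two
  have hlogm : 0 < Real.log m := Real.log_pos hm1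
  have h1 : m ^ T.card ≤ 4 ^ (2*m) := by
    calc m ^ T.card = ∏ _p ∈ T, m := (prod_const m).symm
    _ ≤ ∏ p ∈ T, p := prod_le_prod' fun p hp => (mem_Ioc.1 (mem_filter.1 hp).1).1.le
    _ ≤ primorial (2*m) := by
        refine prod_le_prod_of_subset_of_one_le' ?_ ?_
        · intro p hp
          simp only [hT, mem_filter, mem_Ioc, mem_range] at hp ⊢
          exact ⟨Nat.lt_succ_of_le hp.1.2, hp.2⟩
        · intro i hi _
          exact ((mem_filter.1 hi).2).one_lt.le
    _ ≤ 4 ^ (2*m) := primorial_le_4_pow _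
  have h2 : (T.card : ℝ) * Real.log m ≤ (2*m) * Real.log 4 := by
    have := Real.log_le_log (by positivity) (show ((m:ℝ)) ^ T.card ≤ (4:ℝ) ^ (2*m) by exact_mod_cast h1)
    rwa [Real.log_pow, Real.log_pow, Nat.cast_mul, Nat.cast_ofNat] at this
  have hcard : (T.card : ℝ) ≤ 2 * m * Real.log 4 / Real.log m := by
    rw [le_div_iff₀ hlogm]; linarith
  have h3 : ∑ p ∈ T, ((p:ℝ)^2)⁻¹ ≤ T.card • (((m:ℝ)^2)⁻¹) := by
    refine Finset.sum_le_card_nsmul T _ _ ?_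
    intro p hp
    have hpm : (m:ℝ) ≤ p := by exact_mod_cast (mem_Ioc.1 (mem_filter.1 hp).1).1.le
    have : (m:ℝ)^2 ≤ (p:ℝ)^2 := by nlinarith
    exact inv_anti₀ (by positivity) this
  have hm0 : (0:ℝ) < m := by linarith
  calc ∑ p ∈ T, ((p:ℝ)^2)⁻¹ ≤ T.card • (((m:ℝ)^2)⁻¹) := h3
    _ = (T.card:ℝ) * ((m:ℝ)^2)⁻¹ := by rw [nsmul_eq_mul]
    _ ≤ (2 * m * Real.log 4 / Real.log m) * ((m:ℝ)^2)⁻¹ := by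
        apply mul_le_mul_of_nonneg_right hcard (by positivity)
    _ = 2 * Real.log 4 / (m * Real.log m) := by field_simp

lemma cheb_tail (m : ℕ) (hm : 2 ≤ m) (K : ℕ) :
    ∑ p ∈ (Finset.Ioc m (2^K*m)).filter Nat.Prime, ((p:ℝ)^2)⁻¹
      ≤ (2 * Real.log 4 / Real.log m) * (2/m - 2/(2^K*m)) := by
  have hm1 : (1:ℝ) < m := by exact_mod_cast hm.trans_lt' one_lt_two
  have hlogm : 0 < Real.log m := Real.log_pos hm1
  have hlog4 : 0 < Real.log 4 := Real.log_pos (by norm_num)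
  induction K with
  | zero => simp
  | succ K ih =>
    have hmpos : 0 < m := by omega
    have hK : m ≤ 2^K * m := Nat.le_mul_of_pos_left m (Nat.pow_pos (by norm_num))
    have hKK : 2^K*m ≤ 2^(K+1)*m := by
      apply Nat.mul_le_mul_right
      exact Nat.pow_le_pow_right (by norm_num) (by omega)
    have hsplit : Finset.Ioc m (2^(K+1)*m) =
        Finset.Ioc m (2^K*m) ∪ Finset.Ioc (2^K*m) (2^(K+1)*m) :=
      (Finset.Ioc_union_Ioc_eq_Ioc hK hKK).symm
    have hdisj : Disjoint ((Finset.Ioc m (2^K*m)).filter Nat.Prime)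
        ((Finset.Ioc (2^K*m) (2^(K+1)*m)).filter Nat.Prime) :=
      by
        refine Finset.disjoint_left.2 ?_
        intro a ha hb
        simp only [mem_filter, mem_Ioc] at ha hb
        omega
    rw [hsplit, Finset.filter_union, Finset.sum_union hdisj]
    have hblock : ∑ p ∈ (Finset.Ioc (2^K*m) (2^(K+1)*m)).filter Nat.Prime, ((p:ℝ)^2)⁻¹
        ≤ (2 * Real.log 4 / Real.log m) * (2/(2^K*m) - 2/(2^(K+1)*m)) := by
      have h2m : (2^(K+1)*m) = 2*(2^K*m) := by ring
      have hb := cheb_block (2^K*m) (le_trans hm hK)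
      rw [h2m]
      have hmK1 : (1:ℝ) ≤ (2^K*m : ℕ) := by
        have : (1:ℕ) ≤ 2^K*m := le_trans (by omega) hK
        exact_mod_cast this
      have hlogmK : Real.log m ≤ Real.log (2^K*m : ℕ) :=
        Real.log_le_log (by linarith) (by exact_mod_cast hK)
      have hMpos : (0:ℝ) < (2^K*m : ℕ) := by positivity
      refine hb.trans ?_
      have key : 2 * Real.log 4 / ((2^K*m : ℕ) * Real.log (2^K*m : ℕ))
          ≤ 2 * Real.log 4 / ((2^K*m : ℕ) * Real.log m) := by
        apply div_le_div_of_nonneg_left (by positivity) (by positivity)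
        exact mul_le_mul_of_nonneg_left hlogmK (by positivity)
      refine key.trans (le_of_eq ?_)
      have hcast : ((2^K*m : ℕ) : ℝ) = 2^K * m := by push_cast; ring
      rw [hcast]
      have h2Km : (0:ℝ) < 2^K * (m:ℝ) := by positivity
      field_simp
      ring
    have := add_le_add ih hblock
    refine this.trans (le_of_eq ?_)
    push_cast
    ring

set_option maxHeartbeats 1000000 in
theorem sum_over_primes_bound (c₂ : ℝ) (hc₂ : 0 < c₂) :
    ∃ C : ℝ, 0 < C ∧ ∃ Y : ℝ, ∀ y : ℝ, Y ≤ y →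
      ∑ p ∈ (Finset.range ⌈y⌉₊).filter
          (fun p : ℕ => p.Prime ∧ Real.sqrt y ≤ (p : ℝ) ∧ (p : ℝ) < y / 2),
        (c₂ * y / (p * log (y / p))) ^ 2 ≤ C * y ^ ((3 : ℝ) / 2) / (log y) ^ 3 := by
  have hlog2 : 0 < Real.log 2 := Real.log_pos (by norm_num)
  have hlog4 : 0 < Real.log 4 := Real.log_pos (by norm_num)
  refine ⟨512 * Real.log 4 * c₂^2 + 2 * c₂^2 / (Real.log 2)^2, by positivity, ?_⟩
  have hev : ∀ᶠ y : ℝ in Filter.atTop, (Real.log y)^3 ≤ y ^ ((1:ℝ)/4) := by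
    have h := (isLittleO_log_rpow_atTop (show (0:ℝ) < 1/12 by norm_num)).bound one_pos
    filter_upwards [h, Filter.eventually_ge_atTop (1:ℝ)] with y hy hy1
    have hy0 : (0:ℝ) < y := by linarith
    have hlogy : 0 ≤ Real.log y := Real.log_nonneg hy1
    have h12 : Real.log y ≤ y ^ ((1:ℝ)/12) := by
      rw [Real.norm_eq_abs, Real.norm_eq_abs, abs_of_nonneg hlogy,
        abs_of_nonneg (Real.rpow_nonneg hy0.le _), one_mul] at hy
      exact hy
    calc (Real.log y)^3 ≤ (y ^ ((1:ℝ)/12))^3 := by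
          apply pow_le_pow_left₀ hlogy h12
      _ = y ^ ((1:ℝ)/4) := by
          rw [← Real.rpow_natCast (y ^ ((1:ℝ)/12)) 3, ← Real.rpow_mul hy0.le]
          norm_num
  obtain ⟨Y₀, hY₀⟩ := Filter.eventually_atTop.1 hev
  refine ⟨max Y₀ 100, fun y hy => ?_⟩
  have hy100 : (100:ℝ) ≤ y := le_trans (le_max_right _ _) hy
  have hlog3 : (Real.log y)^3 ≤ y ^ ((1:ℝ)/4) := hY₀ y (le_trans (le_max_left _ _) hy)
  have hy0 : (0:ℝ) < y := by linarith
  have hy1 : (1:ℝ) ≤ y := by linarith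
  have hlogy : 0 < Real.log y := Real.log_pos (by linarith)
  set s := Real.sqrt y with hs
  have hs0 : 0 < s := Real.sqrt_pos.2 hy0
  have hss : s * s = y := Real.mul_self_sqrt hy0.le
  have hs10 : (10:ℝ) ≤ s := by
    rw [hs, show (10:ℝ) = Real.sqrt 100 by
      rw [show (100:ℝ) = 10^2 by norm_num, Real.sqrt_sq]; norm_num]
    exact Real.sqrt_le_sqrt hy100
  have hlog16 : 4 * Real.log 2 ≤ Real.log y := by
    have h1 : Real.log 16 ≤ Real.log y := Real.log_le_log (by norm_num) (by linarith)
    have h2 : Real.log 16 = 4 * Real.log 2 := by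
      rw [show (16:ℝ) = 2^4 by norm_num, Real.log_pow]; norm_num
    linarith
  set m : ℕ := ⌊s⌋₊ - 1 with hmdef
  have hfloor1 : 1 ≤ ⌊s⌋₊ := Nat.le_floor (by exact_mod_cast (by linarith : (1:ℝ) ≤ s))
  have hmcast : (m:ℝ) = (⌊s⌋₊ : ℝ) - 1 := by
    rw [hmdef]; push_cast [hfloor1]; ring
  have hm_lt_s : (m:ℝ) < s := by
    rw [hmcast]
    have := Nat.floor_le hs0.le
    linarith
  have hm_ge : s/2 ≤ (m:ℝ) := by
    rw [hmcast]
    have := Nat.lt_floor_add_one s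
    linarith
  have hm2 : 2 ≤ m := by
    have : (2:ℝ) ≤ (m:ℝ) := by linarith
    exact_mod_cast this
  have hm1R : (1:ℝ) < (m:ℝ) := by linarith
  have hlogm_pos : 0 < Real.log m := Real.log_pos hm1R
  have hlogm : Real.log y / 4 ≤ Real.log m := by
    have h1 : Real.log (s/2) ≤ Real.log m := Real.log_le_log (by positivity) hm_ge
    have h2 : Real.log (s/2) = Real.log y / 2 - Real.log 2 := by
      rw [Real.log_div hs0.ne' (by norm_num), Real.log_sqrt hy0.le]
    linarith
  set K : ℕ := ⌈y⌉₊ with hKdef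
  set S := (Finset.range K).filter
      (fun p : ℕ => p.Prime ∧ s ≤ (p : ℝ) ∧ (p : ℝ) < y / 2) with hSdef
  rw [← Finset.sum_filter_add_sum_filter_not S (fun p : ℕ => (p:ℝ) ≤ y ^ ((3:ℝ)/4))]
  have h32 : y ^ ((3:ℝ)/2) = y * s := by
    rw [hs, Real.sqrt_eq_rpow,
      show (3:ℝ)/2 = 1 + 1/2 by norm_num, Real.rpow_add hy0, Real.rpow_one]
  have hS1 : ∑ p ∈ S.filter (fun p : ℕ => (p:ℝ) ≤ y ^ ((3:ℝ)/4)),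
      (c₂ * y / (p * Real.log (y / p)))^2
      ≤ 512 * Real.log 4 * c₂^2 * y ^ ((3:ℝ)/2) / (Real.log y)^3 := by
    have hstep1 : ∀ p ∈ S.filter (fun p : ℕ => (p:ℝ) ≤ y ^ ((3:ℝ)/4)),
        (c₂ * y / (p * Real.log (y / p)))^2
          ≤ (4*c₂*y/Real.log y)^2 * ((p:ℝ)^2)⁻¹ := by
      intro p hp
      obtain ⟨hpS, hpu⟩ := Finset.mem_filter.1 hp
      obtain ⟨hpr, hprime, hsp, hpy2⟩ := Finset.mem_filter.1 hpS
      have hppos : (0:ℝ) < p := by linarith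
      have hyp14 : y ^ ((1:ℝ)/4) ≤ y / p := by
        rw [le_div_iff₀ hppos]
        have hmul : y ^ ((1:ℝ)/4) * y ^ ((3:ℝ)/4) = y := by
          rw [← Real.rpow_add hy0]; norm_num
        calc y ^ ((1:ℝ)/4) * p ≤ y ^ ((1:ℝ)/4) * y ^ ((3:ℝ)/4) :=
              mul_le_mul_of_nonneg_left hpu (Real.rpow_nonneg hy0.le _)
          _ = y := hmul
      have hlyp : Real.log y / 4 ≤ Real.log (y / p) := by
        have h1 : Real.log (y ^ ((1:ℝ)/4)) ≤ Real.log (y/p) :=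
          Real.log_le_log (by positivity) hyp14
        rw [Real.log_rpow hy0] at h1
        linarith
      have hlyp0 : 0 < Real.log (y / p) := by linarith
      have hkey : c₂ * y / (p * Real.log (y / p)) ≤ (4*c₂*y/Real.log y) * ((p:ℝ))⁻¹ := by
        have h1 : c₂ * y / (p * Real.log (y / p)) ≤ c₂ * y / (p * (Real.log y / 4)) := by
          apply div_le_div_of_nonneg_left (by positivity) (by positivity)
          exact mul_le_mul_of_nonneg_left hlyp hppos.le
        refine h1.trans (le_of_eq ?_)
        field_simp
      calc (c₂ * y / (p * Real.log (y / p)))^2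
          ≤ ((4*c₂*y/Real.log y) * ((p:ℝ))⁻¹)^2 := by
            apply pow_le_pow_left₀ (by positivity) hkey
        _ = (4*c₂*y/Real.log y)^2 * ((p:ℝ)^2)⁻¹ := by
            rw [mul_pow, ← inv_pow]
    have hsub : S.filter (fun p : ℕ => (p:ℝ) ≤ y ^ ((3:ℝ)/4))
        ⊆ (Finset.Ioc m (2^K*m)).filter Nat.Prime := by
      intro p hp
      obtain ⟨hpS, hpu⟩ := Finset.mem_filter.1 hp
      obtain ⟨hpr, hprime, hsp, hpy2⟩ := Finset.mem_filter.1 hpS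
      rw [Finset.mem_filter, Finset.mem_Ioc]
      refine ⟨⟨?_, ?_⟩, hprime⟩
      · have : (m:ℝ) < p := lt_of_lt_of_le hm_lt_s hsp
        exact_mod_cast this
      · have h1 : p < K := Finset.mem_range.1 hpr
        have h2 : K < 2^K := Nat.lt_two_pow_self
        have h4 : p ≤ 2^K := by omega
        calc p ≤ 2^K := h4
          _ = 2^K * 1 := (Nat.mul_one _).symm
          _ ≤ 2^K * m := Nat.mul_le_mul_left _ (by omega)
    have hsum : ∑ p ∈ S.filter (fun p : ℕ => (p:ℝ) ≤ y ^ ((3:ℝ)/4)), ((p:ℝ)^2)⁻¹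
        ≤ 4 * Real.log 4 / (m * Real.log m) := by
      have h1 : ∑ p ∈ S.filter (fun p : ℕ => (p:ℝ) ≤ y ^ ((3:ℝ)/4)), ((p:ℝ)^2)⁻¹
          ≤ ∑ p ∈ (Finset.Ioc m (2^K*m)).filter Nat.Prime, ((p:ℝ)^2)⁻¹ :=
        Finset.sum_le_sum_of_subset_of_nonneg hsub (fun i _ _ => by positivity)
      have h2 := cheb_tail m hm2 K
      have h3 : (2 * Real.log 4 / Real.log m) * (2/(m:ℝ) - 2/((2^K*m : ℕ):ℝ))
          ≤ 4 * Real.log 4 / ((m:ℝ) * Real.log m) := by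
        have hpos : (0:ℝ) < ((2^K*m : ℕ):ℝ) := by positivity
        have : (2 * Real.log 4 / Real.log m) * (2/(m:ℝ) - 2/((2^K*m : ℕ):ℝ))
            ≤ (2 * Real.log 4 / Real.log m) * (2/(m:ℝ)) := by
          apply mul_le_mul_of_nonneg_left _ (by positivity)
          have : 0 ≤ 2/((2^K*m : ℕ):ℝ) := by positivity
          linarith
        refine this.trans (le_of_eq ?_)
        have hm0 : (0:ℝ) < (m:ℝ) := by linarith
        field_simp
        ring
      calc ∑ p ∈ S.filter (fun p : ℕ => (p:ℝ) ≤ y ^ ((3:ℝ)/4)), ((p:ℝ)^2)⁻¹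
          ≤ ∑ p ∈ (Finset.Ioc m (2^K*m)).filter Nat.Prime, ((p:ℝ)^2)⁻¹ := h1
        _ ≤ (2 * Real.log 4 / Real.log m) * (2/(m:ℝ) - 2/((2^K*m : ℕ):ℝ)) := by
            convert h2 using 3 <;> push_cast <;> ring
        _ ≤ 4 * Real.log 4 / ((m:ℝ) * Real.log m) := h3
    calc ∑ p ∈ S.filter (fun p : ℕ => (p:ℝ) ≤ y ^ ((3:ℝ)/4)),
        (c₂ * y / (p * Real.log (y / p)))^2
        ≤ ∑ p ∈ S.filter (fun p : ℕ => (p:ℝ) ≤ y ^ ((3:ℝ)/4)),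
            (4*c₂*y/Real.log y)^2 * ((p:ℝ)^2)⁻¹ := Finset.sum_le_sum hstep1
      _ = (4*c₂*y/Real.log y)^2 * ∑ p ∈ S.filter (fun p : ℕ => (p:ℝ) ≤ y ^ ((3:ℝ)/4)),
            ((p:ℝ)^2)⁻¹ := (Finset.mul_sum _ _ _).symm
      _ ≤ (4*c₂*y/Real.log y)^2 * (4 * Real.log 4 / ((m:ℝ) * Real.log m)) := by
          apply mul_le_mul_of_nonneg_left hsum (by positivity)
      _ ≤ (4*c₂*y/Real.log y)^2 * (4 * Real.log 4 / (s * Real.log y / 8)) := by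
          apply mul_le_mul_of_nonneg_left _ (by positivity)
          apply div_le_div_of_nonneg_left (by positivity) (by positivity)
          have := mul_le_mul hm_ge hlogm (by positivity) (by linarith)
          linarith
      _ = 512 * Real.log 4 * c₂^2 * y ^ ((3:ℝ)/2) / (Real.log y)^3 := by
          rw [h32]
          field_simp
          linear_combination (-512:ℝ) * hss
  have hy34 : (10:ℝ) ≤ y ^ ((3:ℝ)/4) := by
    have h1 : y ^ ((1:ℝ)/2) ≤ y ^ ((3:ℝ)/4) :=
      Real.rpow_le_rpow_of_exponent_le hy1 (by norm_num)
    have h2 : y ^ ((1:ℝ)/2) = s := by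
      rw [hs, Real.sqrt_eq_rpow]
    linarith
  have hy34y : y ^ ((3:ℝ)/4) ≤ y := by
    have h1 : y ^ ((3:ℝ)/4) ≤ y ^ (1:ℝ) :=
      Real.rpow_le_rpow_of_exponent_le hy1 (by norm_num)
    rwa [Real.rpow_one] at h1
  set k : ℕ := ⌊y ^ ((3:ℝ)/4)⌋₊ with hkdef
  have hk_le : (k:ℝ) ≤ y ^ ((3:ℝ)/4) := Nat.floor_le (by positivity)
  have hk_ge : y ^ ((3:ℝ)/4) / 2 ≤ (k:ℝ) := by
    have := Nat.lt_floor_add_one (y ^ ((3:ℝ)/4))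
    linarith
  have hkpos : (0:ℝ) < k := by
    have : (4:ℝ) ≤ (k:ℝ) := by linarith
    linarith
  have hk0 : k ≠ 0 := (Nat.cast_pos.mp hkpos).ne'
  have hkK : k ≤ K := by
    have h1 : (k:ℝ) ≤ (K:ℝ) := by
      have := Nat.le_ceil y
      calc (k:ℝ) ≤ y ^ ((3:ℝ)/4) := hk_le
        _ ≤ y := hy34y
        _ ≤ (K:ℝ) := this
    exact_mod_cast h1
  have hS2 : ∑ p ∈ S.filter (fun p : ℕ => ¬ (p:ℝ) ≤ y ^ ((3:ℝ)/4)),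
      (c₂ * y / (p * Real.log (y / p)))^2
      ≤ (2 * c₂^2 / (Real.log 2)^2) * y ^ ((3:ℝ)/2) / (Real.log y)^3 := by
    have hstep1 : ∀ p ∈ S.filter (fun p : ℕ => ¬ (p:ℝ) ≤ y ^ ((3:ℝ)/4)),
        (c₂ * y / (p * Real.log (y / p)))^2
          ≤ (c₂*y/Real.log 2)^2 * ((p:ℝ)^2)⁻¹ := by
      intro p hp
      obtain ⟨hpS, hpu⟩ := Finset.mem_filter.1 hp
      obtain ⟨hpr, hprime, hsp, hpy2⟩ := Finset.mem_filter.1 hpS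
      have hppos : (0:ℝ) < p := by linarith
      have h2yp : (2:ℝ) ≤ y / p := by
        rw [le_div_iff₀ hppos]
        linarith
      have hlyp : Real.log 2 ≤ Real.log (y / p) :=
        Real.log_le_log (by norm_num) h2yp
      have hlyp0 : 0 < Real.log (y / p) := by linarith
      have hkey : c₂ * y / (p * Real.log (y / p)) ≤ (c₂*y/Real.log 2) * ((p:ℝ))⁻¹ := by
        have h1 : c₂ * y / (p * Real.log (y / p)) ≤ c₂ * y / (p * Real.log 2) := by
          apply div_le_div_of_nonneg_left (by positivity) (by positivity)
          exact mul_le_mul_of_nonneg_left hlyp hppos.le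
        refine h1.trans (le_of_eq ?_)
        field_simp
      calc (c₂ * y / (p * Real.log (y / p)))^2
          ≤ ((c₂*y/Real.log 2) * ((p:ℝ))⁻¹)^2 := by
            apply pow_le_pow_left₀ (by positivity) hkey
        _ = (c₂*y/Real.log 2)^2 * ((p:ℝ)^2)⁻¹ := by
            rw [mul_pow, ← inv_pow]
    have hsub : S.filter (fun p : ℕ => ¬ (p:ℝ) ≤ y ^ ((3:ℝ)/4)) ⊆ Finset.Ioc k K := by
      intro p hp
      obtain ⟨hpS, hpu⟩ := Finset.mem_filter.1 hp
      obtain ⟨hpr, hprime, hsp, hpy2⟩ := Finset.mem_filter.1 hpS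
      rw [Finset.mem_Ioc]
      push_neg at hpu
      constructor
      · have : (k:ℝ) < p := lt_of_le_of_lt hk_le hpu
        exact_mod_cast this
      · exact (Finset.mem_range.1 hpr).le
    have hsum : ∑ p ∈ S.filter (fun p : ℕ => ¬ (p:ℝ) ≤ y ^ ((3:ℝ)/4)), ((p:ℝ)^2)⁻¹
        ≤ 2 / y ^ ((3:ℝ)/4) := by
      calc ∑ p ∈ S.filter (fun p : ℕ => ¬ (p:ℝ) ≤ y ^ ((3:ℝ)/4)), ((p:ℝ)^2)⁻¹
          ≤ ∑ i ∈ Finset.Ioc k K, ((i:ℝ)^2)⁻¹ :=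
            Finset.sum_le_sum_of_subset_of_nonneg hsub (fun i _ _ => by positivity)
        _ ≤ (k:ℝ)⁻¹ - (K:ℝ)⁻¹ := sum_Ioc_inv_sq_le_sub hk0 hkK
        _ ≤ (k:ℝ)⁻¹ := by
            have : (0:ℝ) ≤ (K:ℝ)⁻¹ := by positivity
            linarith
        _ ≤ 2 / y ^ ((3:ℝ)/4) := by
            rw [inv_eq_one_div, div_le_div_iff₀ hkpos (by positivity)]
            linarith
    have h5432 : y ^ ((5:ℝ)/4) * y ^ ((1:ℝ)/4) = y ^ ((3:ℝ)/2) := by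
      rw [← Real.rpow_add hy0]; norm_num
    have h54 : y^2 / y ^ ((3:ℝ)/4) = y ^ ((5:ℝ)/4) := by
      rw [← Real.rpow_natCast y 2, ← Real.rpow_sub hy0]
      norm_num
    calc ∑ p ∈ S.filter (fun p : ℕ => ¬ (p:ℝ) ≤ y ^ ((3:ℝ)/4)),
        (c₂ * y / (p * Real.log (y / p)))^2
        ≤ ∑ p ∈ S.filter (fun p : ℕ => ¬ (p:ℝ) ≤ y ^ ((3:ℝ)/4)),
            (c₂*y/Real.log 2)^2 * ((p:ℝ)^2)⁻¹ := Finset.sum_le_sum hstep1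
      _ = (c₂*y/Real.log 2)^2 * ∑ p ∈ S.filter (fun p : ℕ => ¬ (p:ℝ) ≤ y ^ ((3:ℝ)/4)),
            ((p:ℝ)^2)⁻¹ := (Finset.mul_sum _ _ _).symm
      _ ≤ (c₂*y/Real.log 2)^2 * (2 / y ^ ((3:ℝ)/4)) := by
          apply mul_le_mul_of_nonneg_left hsum (by positivity)
      _ = (2 * c₂^2 / (Real.log 2)^2) * y ^ ((5:ℝ)/4) := by
          rw [← h54]
          field_simp
      _ ≤ (2 * c₂^2 / (Real.log 2)^2) * (y ^ ((3:ℝ)/2) / (Real.log y)^3) := by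
          apply mul_le_mul_of_nonneg_left _ (by positivity)
          rw [le_div_iff₀ (by positivity)]
          calc y ^ ((5:ℝ)/4) * (Real.log y)^3 ≤ y ^ ((5:ℝ)/4) * y ^ ((1:ℝ)/4) :=
                mul_le_mul_of_nonneg_left hlog3 (by positivity)
            _ = y ^ ((3:ℝ)/2) := h5432
      _ = (2 * c₂^2 / (Real.log 2)^2) * y ^ ((3:ℝ)/2) / (Real.log y)^3 := by
          ring
  have hsplit : (512 * Real.log 4 * c₂^2 + 2 * c₂^2 / (Real.log 2)^2) * y ^ ((3:ℝ)/2) / (Real.log y)^3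
      = 512 * Real.log 4 * c₂^2 * y ^ ((3:ℝ)/2) / (Real.log y)^3
        + (2 * c₂^2 / (Real.log 2)^2) * y ^ ((3:ℝ)/2) / (Real.log y)^3 := by
    ring
  rw [hsplit]
  exact add_le_add hS1 hS2
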